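/- Every nontrivial free conformal module of rank one over the loop Schrödinger–Virasoro Lie conformal algebra csv is isomorphic to M_{a,b,c,0,0} = ℂ[∂]v with actions L_i λ v = c^i(∂+aλ+b)v, M_i λ v = 0, Y_i λ v = 0 for some a,b ∈ ℂ and c ∈ ℂ*. In particular, on any free rank-one conformal csv-module, the elements M_i and Y_i necessarily act trivially. -/

import Mathlib

open Polynomial

/-- Generators of the loop Schrödinger–Virasoro Lie conformal algebra csv. -/
inductive Gen : Type
  | L : ℤ → Gen
  | M : ℤ → Gen
  | Y : ℤ → Gen
  deriving DecidableEq

/-- The λ-bracket of generators of csv (λ evaluated at `l`, ∂ = `X`). -/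
noncomputable def br (l : ℂ) : Gen → Gen → (Gen →₀ Polynomial ℂ)
  | Gen.L i, Gen.L j => Finsupp.single (Gen.L (i + j)) (X + C (2 * l))
  | Gen.L i, Gen.M j => Finsupp.single (Gen.M (i + j)) (X + C l)
  | Gen.M i, Gen.L j => Finsupp.single (Gen.M (i + j)) (C l)
  | Gen.L i, Gen.Y j => Finsupp.single (Gen.Y (i + j)) (X + C ((3/2) * l))
  | Gen.Y i, Gen.L j => Finsupp.single (Gen.Y (i + j)) (C (1/2) * X + C ((3/2) * l))
  | Gen.Y i, Gen.Y j => Finsupp.single (Gen.M (i + j)) (X + C (2 * l))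
  | _, _ => 0

namespace CSV

lemma hasse_near (p : ℂ[X]) (e : ℕ) (h : p.natDegree ≤ e + 1) :
    hasseDeriv e p = C (p.coeff e) + C ((e+1 : ℂ) * p.coeff (e+1)) * X := by
  ext n
  rw [hasseDeriv_coeff]
  rcases n with _ | n
  · simp
  rcases n with _ | n
  · rw [Nat.add_comm 1 e, Nat.choose_succ_self_right]
    simp
  · have h0 : p.coeff (n + 2 + e) = 0 := by
      apply coeff_eq_zero_of_natDegree_lt; omega
    simp [h0, coeff_C, coeff_one]

lemma taylor_coeff_near (p : ℂ[X]) (t : ℂ) (e : ℕ) (h : p.natDegree ≤ e + 1) :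
    (p.comp (X + C t)).coeff e = p.coeff e + ((e:ℂ)+1) * t * p.coeff (e+1) := by
  rw [← taylor_apply, taylor_coeff, hasse_near p e h]
  simp; ring

lemma taylor_coeff_top (p : ℂ[X]) (t : ℂ) (d : ℕ) (h : p.natDegree ≤ d) :
    (p.comp (X + C t)).coeff d = p.coeff d := by
  have h2 : p.natDegree ≤ d + 1 := le_trans h (by omega)
  have hz : p.coeff (d+1) = 0 := coeff_eq_zero_of_natDegree_lt (by omega)
  rw [taylor_coeff_near p t d h2, hz]
  ring

lemma natDegree_comp_shift (p : ℂ[X]) (t : ℂ) :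
    (p.comp (X + C t)).natDegree = p.natDegree := by
  rw [← taylor_apply, natDegree_taylor]

lemma two_term (a b : ℂ[X]) (da db : ℕ) (hda : 1 ≤ da) (hdb : 1 ≤ db)
    (ha : a.natDegree ≤ da) (hb : b.natDegree ≤ db) :
    (a * b).coeff (da + db - 1)
      = a.coeff da * b.coeff (db - 1) + a.coeff (da - 1) * b.coeff db := by
  rw [coeff_mul]
  have hsub : ({(da, db-1), (da-1, db)} : Finset (ℕ × ℕ)) ⊆ Finset.HasAntidiagonal.antidiagonal (da+db-1) := by
    intro x hx
    simp only [Finset.mem_insert, Finset.mem_singleton] at hx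
    rcases hx with rfl | rfl <;> simp [Finset.mem_antidiagonal] <;> omega
  rw [← Finset.sum_subset hsub]
  · rw [Finset.sum_pair (by simp; omega)]
  · intro x hx hnx
    simp only [Finset.HasAntidiagonal.mem_antidiagonal] at hx
    simp only [Finset.mem_insert, Finset.mem_singleton] at hnx
    rcases Nat.lt_or_ge da x.1 with h1 | h1
    · rw [coeff_eq_zero_of_natDegree_lt (lt_of_le_of_lt ha h1), zero_mul]
    · rcases Nat.lt_or_ge db x.2 with h2 | h2
      · rw [coeff_eq_zero_of_natDegree_lt (lt_of_le_of_lt hb h2), mul_zero]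
      · exfalso
        apply hnx
        have : x = (x.1, x.2) := rfl
        rcases Nat.lt_or_ge x.1 da with h3 | h3
        · right; rw [this, Prod.mk.injEq]; omega
        · left; rw [this, Prod.mk.injEq]; omega

lemma cast_pred_add_one {d : ℕ} (h : 1 ≤ d) : ((d - 1 : ℕ) : ℂ) + 1 = (d : ℂ) := by
  have h2 : d - 1 + 1 = d := by omega
  calc ((d - 1 : ℕ) : ℂ) + 1 = ((d - 1 + 1 : ℕ) : ℂ) := by push_cast; ring
    _ = (d : ℂ) := by rw [h2]

/-- The subleading coefficient of the "conformal commutator". -/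
lemma comm_coeff (p q : ℂ[X]) (t s : ℂ)
    (h : 1 ≤ p.natDegree + q.natDegree) :
    (p.comp (X + C t) * q - q.comp (X + C s) * p).coeff (p.natDegree + q.natDegree - 1)
      = p.leadingCoeff * q.leadingCoeff *
        ((p.natDegree : ℂ) * t - (q.natDegree : ℂ) * s) := by
  set d1 := p.natDegree with hd1
  set d2 := q.natDegree with hd2
  have hlp : p.leadingCoeff = p.coeff d1 := (coeff_natDegree).symm
  have hlq : q.leadingCoeff = q.coeff d2 := (coeff_natDegree).symm
  rcases Nat.eq_zero_or_pos d1 with h1 | h1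
  · -- p is a constant
    have hp : p = C (p.coeff 0) := eq_C_of_natDegree_eq_zero (by rw [← hd1]; exact h1)
    have hd2' : 1 ≤ d2 := by omega
    have hD : p.comp (X + C t) * q - q.comp (X + C s) * p
        = C (p.coeff 0) * (q - q.comp (X + C s)) := by
      conv_lhs => rw [hp]
      rw [C_comp]; ring
    rw [hD, coeff_C_mul, coeff_sub, h1, Nat.zero_add]
    rw [taylor_coeff_near q s (d2-1) (by omega)]
    rw [show d2 - 1 + 1 = d2 from by omega]
    rw [cast_pred_add_one hd2', hlp, hlq, h1]
    simp only [Nat.cast_zero]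
    ring
  · rcases Nat.eq_zero_or_pos d2 with h2 | h2
    · -- q is a constant
      have hq : q = C (q.coeff 0) := eq_C_of_natDegree_eq_zero (by rw [← hd2]; exact h2)
      have hD : p.comp (X + C t) * q - q.comp (X + C s) * p
          = C (q.coeff 0) * (p.comp (X + C t) - p) := by
        conv_lhs => rw [hq]
        rw [C_comp]; ring
      rw [hD, coeff_C_mul, coeff_sub]
      rw [h2, Nat.add_zero]
      rw [taylor_coeff_near p t (d1-1) (by omega)]
      rw [show d1 - 1 + 1 = d1 from by omega]
      rw [cast_pred_add_one h1, hlp, hlq, h2]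
      have hz : p.coeff (d1 - 1) - p.coeff (d1 - 1) = 0 := by ring
      simp only [Nat.cast_zero]
      ring
    · -- main case
      rw [coeff_sub]
      rw [two_term (p.comp (X + C t)) q d1 d2 h1 h2 (le_of_eq (natDegree_comp_shift p t)) le_rfl]
      have e2 : (q.comp (X + C s) * p).coeff (d1 + d2 - 1)
          = (q.comp (X + C s)).coeff d2 * p.coeff (d1 - 1)
            + (q.comp (X + C s)).coeff (d2 - 1) * p.coeff d1 := by
        rw [show d1 + d2 - 1 = d2 + d1 - 1 from by omega]
        exact two_term (q.comp (X + C s)) p d2 d1 h2 h1 (le_of_eq (natDegree_comp_shift q s)) le_rfl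
      rw [e2]
      rw [taylor_coeff_top p t d1 le_rfl, taylor_coeff_top q s d2 le_rfl]
      rw [taylor_coeff_near p t (d1-1) (by omega), taylor_coeff_near q s (d2-1) (by omega)]
      rw [show d1 - 1 + 1 = d1 from by omega, show d2 - 1 + 1 = d2 from by omega]
      rw [cast_pred_add_one h1, cast_pred_add_one h2, hlp, hlq]
      ring

lemma comp_shift_ne_zero {p : ℂ[X]} (hp : p ≠ 0) (t : ℂ) : p.comp (X + C t) ≠ 0 := by
  intro h0
  apply hp
  have key : (p.comp (X + C t)).comp (X - C t) = p := by
    rw [comp_assoc]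
    have : (X + C t).comp (X - C t) = (X : ℂ[X]) := by
      simp [add_comp, X_comp, C_comp]
    rw [this, comp_X]
  rw [h0, zero_comp] at key
  exact key.symm

lemma leadingCoeff_comp_shift (p : ℂ[X]) (t : ℂ) :
    (p.comp (X + C t)).leadingCoeff = p.leadingCoeff := by
  rw [leadingCoeff, natDegree_comp_shift, taylor_coeff_top p t _ le_rfl, coeff_natDegree]

/-- Degree bound for the conformal commutator. -/
lemma comm_degree (p q : ℂ[X]) (t s : ℂ) (hp : p ≠ 0) (hq : q ≠ 0) :
    (p.comp (X + C t) * q - q.comp (X + C s) * p).degree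
      < ((p.natDegree + q.natDegree : ℕ) : WithBot ℕ) := by
  have hpc := comp_shift_ne_zero hp t
  have hqc := comp_shift_ne_zero hq s
  have ha0 : p.comp (X + C t) * q ≠ 0 := mul_ne_zero hpc hq
  have hb0 : q.comp (X + C s) * p ≠ 0 := mul_ne_zero hqc hp
  have hda : (p.comp (X + C t) * q).degree = ((p.natDegree + q.natDegree : ℕ) : WithBot ℕ) := by
    rw [degree_eq_natDegree ha0, natDegree_mul hpc hq, natDegree_comp_shift]
  have hdb : (q.comp (X + C s) * p).degree = ((p.natDegree + q.natDegree : ℕ) : WithBot ℕ) := by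
    rw [degree_eq_natDegree hb0, natDegree_mul hqc hp, natDegree_comp_shift, Nat.add_comm]
  have hlc : (p.comp (X + C t) * q).leadingCoeff = (q.comp (X + C s) * p).leadingCoeff := by
    rw [leadingCoeff_mul, leadingCoeff_mul, leadingCoeff_comp_shift, leadingCoeff_comp_shift]
    ring
  have := degree_sub_lt (hda.trans hdb.symm) ha0 hlc
  rwa [hda] at this

/-- A family of polynomials depending polynomially on a parameter. -/
def Fam (f : ℂ → ℂ[X]) : Prop :=
  ∃ P : Polynomial (Polynomial ℂ), ∀ l : ℂ, f l = P.eval (C l)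

lemma Fam.mul {f g : ℂ → ℂ[X]} (hf : Fam f) (hg : Fam g) : Fam (fun l => f l * g l) := by
  obtain ⟨P, hP⟩ := hf; obtain ⟨Q, hQ⟩ := hg
  exact ⟨P * Q, fun l => by rw [eval_mul, ← hP, ← hQ]⟩

lemma Fam.sub {f g : ℂ → ℂ[X]} (hf : Fam f) (hg : Fam g) : Fam (fun l => f l - g l) := by
  obtain ⟨P, hP⟩ := hf; obtain ⟨Q, hQ⟩ := hg
  exact ⟨P - Q, fun l => by rw [eval_sub, ← hP, ← hQ]⟩

lemma Fam.const (p : ℂ[X]) : Fam (fun _ => p) :=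
  ⟨Polynomial.C p, fun l => by rw [eval_C]⟩

lemma Fam.CId : Fam (fun l => (C l : ℂ[X])) :=
  ⟨Polynomial.X, fun l => by rw [eval_X]⟩

lemma Fam.compShift (p : ℂ[X]) : Fam (fun l => p.comp (X + C l)) := by
  refine ⟨(p.map (C : ℂ →+* ℂ[X])).comp (Polynomial.C (X : ℂ[X]) + Polynomial.X), fun l => ?_⟩
  rw [eval_comp, eval_add, eval_C, eval_X, eval_map]
  rfl

lemma coeff_eval_C (P : Polynomial (Polynomial ℂ)) (n : ℕ) :
    ∃ Q : Polynomial ℂ, ∀ l : ℂ, (P.eval (C l)).coeff n = Q.eval l := by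
  induction P using Polynomial.induction_on' with
  | add p q hp hq =>
    obtain ⟨Qp, hQp⟩ := hp; obtain ⟨Qq, hQq⟩ := hq
    exact ⟨Qp + Qq, fun l => by rw [eval_add, coeff_add, hQp, hQq, eval_add]⟩
  | monomial k a =>
    refine ⟨Polynomial.C (a.coeff n) * Polynomial.X ^ k, fun l => ?_⟩
    rw [eval_monomial]
    rw [← C_pow, coeff_mul_C]
    simp

lemma fam_eq_of_infinite {f g : ℂ → ℂ[X]} (hf : Fam f) (hg : Fam g)
    {S : Set ℂ} (hS : S.Infinite) (h : ∀ l ∈ S, f l = g l) : ∀ l, f l = g l := by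
  obtain ⟨P, hP⟩ := hf; obtain ⟨Q, hQ⟩ := hg
  intro l
  rw [hP, hQ]
  ext n
  obtain ⟨Qp, hQp⟩ := coeff_eval_C P n
  obtain ⟨Qq, hQq⟩ := coeff_eval_C Q n
  rw [hQp, hQq]
  have : Qp - Qq = 0 := by
    apply eq_zero_of_infinite_isRoot
    apply Set.Infinite.mono _ hS
    intro x hx
    have := h x hx
    rw [hP, hQ] at this
    have hc := congrArg (fun r => r.coeff n) this
    simp only [hQp x, hQq x] at hc
    simp [IsRoot, hc]
  have := congrArg (fun r => Polynomial.eval l r) this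
  simp only [eval_sub, eval_zero] at this
  exact sub_eq_zero.mp this

lemma fam_zero_finite {f : ℂ → ℂ[X]} (hf : Fam f) {l₀ : ℂ} (h0 : f l₀ ≠ 0) :
    {l : ℂ | f l = 0}.Finite := by
  obtain ⟨P, hP⟩ := hf
  obtain ⟨n, hn⟩ : ∃ n, (f l₀).coeff n ≠ 0 := by
    by_contra hc; push_neg at hc; exact h0 (Polynomial.ext hc)
  obtain ⟨Q, hQ⟩ := coeff_eval_C P n
  have hQ0 : Q ≠ 0 := by
    intro h
    apply hn
    rw [hP, hQ, h, eval_zero]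
  have : {l : ℂ | f l = 0} ⊆ {l : ℂ | Q.IsRoot l} := by
    intro x hx
    simp only [Set.mem_setOf_eq] at hx ⊢
    have := congrArg (fun r => r.coeff n) hx
    simp only [coeff_zero] at this
    rw [hP, hQ] at this
    exact this
  exact Set.Finite.subset (Polynomial.finite_setOf_isRoot hQ0) this

lemma compl_infinite {T : Set ℂ} (hT : T.Finite) : Tᶜ.Infinite :=
  Set.Finite.infinite_compl hT

lemma fam_eq_off_finite {f g : ℂ → ℂ[X]} (hf : Fam f) (hg : Fam g)
    {T : Set ℂ} (hT : T.Finite) (h : ∀ l ∉ T, f l = g l) : ∀ l, f l = g l :=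
  fam_eq_of_infinite hf hg (compl_infinite hT) (fun l hl => h l hl)

lemma fam_eq_of_ne_zero {f g : ℂ → ℂ[X]} (hf : Fam f) (hg : Fam g)
    (h : ∀ l : ℂ, l ≠ 0 → f l = g l) : ∀ l, f l = g l :=
  fam_eq_off_finite hf hg (Set.finite_singleton 0) (fun l hl => h l (by simpa using hl))

/-- Scalar version: a polynomial function vanishing off a finite set vanishes. -/
lemma scalar_eq_off_finite {Q : Polynomial ℂ} {T : Set ℂ} (hT : T.Finite)
    (h : ∀ l ∉ T, Q.eval l = 0) : ∀ l, Q.eval l = 0 := by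
  have : Q = 0 := by
    apply eq_zero_of_infinite_isRoot
    apply Set.Infinite.mono _ (compl_infinite hT)
    intro x hx
    exact h x hx
  intro l; rw [this, eval_zero]

/-- Polynomial solutions of the multiplicative Cauchy equation with no zeros are ≡ 1. -/
lemma cauchy_mul {A : ℂ → ℂ} (Q : ℂ[X]) (hA : ∀ l, A l = Q.eval l)
    (hmul : ∀ l m : ℂ, l ≠ m → A l * A m = A (l + m))
    (hnz : ∀ l, A l ≠ 0) : ∀ l, A l = 1 := by
  have hQne : Q ≠ 0 := fun h => hnz 0 (by rw [hA, h, eval_zero])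
  have hdeg : Q.degree = 0 := by
    by_contra hd
    obtain ⟨z, hz⟩ := Complex.isAlgClosed.exists_root Q hd
    exact hnz z (by rw [hA]; exact hz)
  have hconst : ∀ l, A l = A 0 := by
    intro l
    rw [hA, hA, Polynomial.eq_C_of_degree_le_zero (le_of_eq hdeg), eval_C, eval_C]
  have h00 : A 1 * A 0 = A 1 := by
    have := hmul 1 0 (by norm_num)
    rwa [add_zero] at this
  have hA0 : A 0 = 1 := mul_left_cancel₀ (hnz 1) (by rw [h00, mul_one])
  intro l; rw [hconst l, hA0]

/-- Polynomial solutions of l·B(l) − m·B(m) = (l−m)·B(l+m) are affine. -/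
lemma affine_sol {B : ℂ → ℂ} (Q : ℂ[X]) (hB : ∀ l, B l = Q.eval l)
    (hrel : ∀ l m : ℂ, l ≠ m → l * B l - m * B m = (l - m) * B (l + m)) :
    ∀ l, B l = (B 1 - B 0) * l + B 0 := by
  have hEzero : ∀ l : ℂ,
      (C (l * B l) - X * Q - (C l - X) * (Q.comp (X + C l)) : ℂ[X]) = 0 := by
    intro l
    apply Polynomial.funext
    intro r
    rw [eval_zero]
    have : ∀ m : ℂ, m ∉ ({l} : Set ℂ) →
        (C (l * B l) - X * Q - (C l - X) * (Q.comp (X + C l)) : ℂ[X]).eval m = 0 := by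
      intro m hm
      simp only [Set.mem_singleton_iff] at hm
      have h := hrel l m (fun he => hm he.symm)
      simp only [eval_sub, eval_mul, eval_C, eval_X, eval_comp, eval_add]
      rw [show m + l = l + m from add_comm m l]
      simp only [← hB]
      linear_combination h
    exact scalar_eq_off_finite (Set.finite_singleton l) this r
  have h1 : ∀ l : ℂ, Q.eval l - l * (derivative Q).eval l - Q.eval 0 = 0 := by
    intro l
    have h2 := congrArg (fun p : ℂ[X] => ((derivative p).eval 0)) (hEzero l)
    simp only [derivative_sub, derivative_mul, derivative_C, derivative_X, derivative_comp,
      derivative_add, one_mul, mul_one, zero_mul, add_zero, zero_add, derivative_zero] at h2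
    simp only [eval_sub, eval_add, eval_mul, eval_neg, eval_X, eval_C, eval_comp, eval_one,
      eval_zero, zero_add, add_zero, mul_zero, zero_mul, zero_sub, sub_zero] at h2
    linear_combination h2
  have hQid : Q - X * derivative Q - C (Q.eval 0) = 0 := by
    apply Polynomial.funext
    intro r
    rw [eval_zero]
    simpa [eval_sub, eval_mul, eval_X, eval_C] using h1 r
  have hcoeff : ∀ N : ℕ, 1 < N → Q.coeff N = 0 := by
    intro N hN
    obtain ⟨k, rfl⟩ : ∃ k, N = k + 2 := ⟨N - 2, by omega⟩
    have hc := congrArg (fun p : ℂ[X] => p.coeff (k+2)) hQid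
    simp only [coeff_sub, coeff_C, coeff_zero] at hc
    rw [if_neg (by omega : ¬(k+2 = 0))] at hc
    rw [show k+2 = (k+1)+1 from rfl, coeff_X_mul, coeff_derivative] at hc
    have hc2 : Q.coeff (k+1+1) * (1 - (((k+1:ℕ):ℂ) + 1)) = 0 := by linear_combination hc
    rcases mul_eq_zero.mp hc2 with h | h
    · exact h
    · exfalso
      have : ((k+1:ℕ):ℂ) = 0 := by linear_combination -h
      exact Nat.cast_ne_zero.mpr (Nat.succ_ne_zero k) this
  have hdeg : Q.natDegree ≤ 1 := natDegree_le_iff_coeff_eq_zero.mpr hcoeff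
  have hform := eq_X_add_C_of_natDegree_le_one hdeg
  have hBv : ∀ l, B l = Q.coeff 1 * l + Q.coeff 0 := by
    intro l
    rw [hB]
    conv_lhs => rw [hform]
    simp [eval_add, eval_mul, eval_C, eval_X]
  intro l
  rw [hBv l, hBv 1, hBv 0]
  ring

/-- A polynomial whose shift differences are all constants has degree ≤ 1. -/
lemma shift_diff_const {p : ℂ[X]}
    (hc : ∀ l : ℂ, ∃ k : ℂ, p.comp (X + C l) - p = C k) : p.natDegree ≤ 1 := by
  by_contra hn
  push_neg at hn
  set n := p.natDegree with hnd
  have h2 : 2 ≤ n := hn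
  obtain ⟨k, hk⟩ := hc 1
  have hco := congrArg (fun r => r.coeff (n - 1)) hk
  simp only [coeff_sub, coeff_C] at hco
  rw [taylor_coeff_near p 1 (n-1) (by omega)] at hco
  rw [show n - 1 + 1 = n from by omega] at hco
  rw [if_neg (by omega)] at hco
  rw [cast_pred_add_one (by omega)] at hco
  have hzero : (n : ℂ) * p.coeff n = 0 := by linear_combination hco
  have hp0 : p ≠ 0 := by
    intro h
    rw [h, natDegree_zero] at hnd
    omega
  have hn0 : p.coeff n ≠ 0 := by
    rw [hnd, coeff_natDegree]
    exact leadingCoeff_ne_zero.mpr hp0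
  rcases mul_eq_zero.mp hzero with h | h
  · exact (Nat.cast_ne_zero.mpr (by omega : n ≠ 0)) h
  · exact hn0 h

end CSV

/-- Classification of nontrivial free rank-one conformal csv-modules M = ℂ[∂]v.
The λ-action of a generator g on v is (act l g)·v ∈ ℂ[∂]v with λ evaluated at l;
it is polynomial in λ (hpoly), satisfies the conformal module compatibility
g₁ λ (g₂ μ v) − g₂ μ (g₁ λ v) = [g₁ λ g₂]_{λ+μ} v on the free generator v (hcomp),
and is nontrivial (hnontriv).  Then the module is M_{a,b,c,0,0}:
L_i λ v = c^i(∂+aλ+b)v, M_i λ v = 0, Y_i λ v = 0 for some a,b ∈ ℂ, c ∈ ℂ*. -/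
theorem stmt_13 (act : ℂ → Gen → Polynomial ℂ)
    (hpoly : ∀ g : Gen, ∃ P : Polynomial (Polynomial ℂ),
      ∀ l : ℂ, act l g = P.eval (C l))
    (hcomp : ∀ (g₁ g₂ : Gen) (l m : ℂ),
      (act m g₂).comp (X + C l) * act l g₁ - (act l g₁).comp (X + C m) * act m g₂
        = (br l g₁ g₂).sum fun h p => C (p.eval (-(l + m))) * act (l + m) h)
    (hnontriv : ∃ (g : Gen) (l : ℂ), act l g ≠ 0) :
    ∃ (a b : ℂ) (c : ℂ), c ≠ 0
      ∧ (∀ (i : ℤ) (l : ℂ), act l (Gen.L i) = C (c ^ i) * (X + C (a * l + b)))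
      ∧ (∀ (i : ℤ) (l : ℂ), act l (Gen.M i) = 0)
      ∧ (∀ (i : ℤ) (l : ℂ), act l (Gen.Y i) = 0) := by
  classical
  have famL : ∀ i : ℤ, CSV.Fam (fun l => act l (Gen.L i)) := fun i => hpoly (Gen.L i)
  have famM : ∀ i : ℤ, CSV.Fam (fun l => act l (Gen.M i)) := fun i => hpoly (Gen.M i)
  have famY : ∀ i : ℤ, CSV.Fam (fun l => act l (Gen.Y i)) := fun i => hpoly (Gen.Y i)
  -- bracket identities
  have LL : ∀ (i j : ℤ) (l m : ℂ),
      (act m (Gen.L j)).comp (X + C l) * act l (Gen.L i)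
        - (act l (Gen.L i)).comp (X + C m) * act m (Gen.L j)
        = C (l - m) * act (l+m) (Gen.L (i+j)) := by
    intro i j l m
    have H := hcomp (Gen.L i) (Gen.L j) l m
    rw [show br l (Gen.L i) (Gen.L j) = Finsupp.single (Gen.L (i+j)) (X + C (2*l)) from rfl,
        Finsupp.sum_single_index (by simp)] at H
    rwa [show ((X + C (2*l) : ℂ[X])).eval (-(l+m)) = l - m from by
      simp only [eval_add, eval_X, eval_C]; ring] at H
  have LY : ∀ (i j : ℤ) (l m : ℂ),
      (act m (Gen.Y j)).comp (X + C l) * act l (Gen.L i)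
        - (act l (Gen.L i)).comp (X + C m) * act m (Gen.Y j)
        = C (l/2 - m) * act (l+m) (Gen.Y (i+j)) := by
    intro i j l m
    have H := hcomp (Gen.L i) (Gen.Y j) l m
    rw [show br l (Gen.L i) (Gen.Y j) = Finsupp.single (Gen.Y (i+j)) (X + C ((3/2)*l)) from rfl,
        Finsupp.sum_single_index (by simp)] at H
    rwa [show ((X + C ((3/2)*l) : ℂ[X])).eval (-(l+m)) = l/2 - m from by
      simp only [eval_add, eval_X, eval_C]; ring] at H
  have YL : ∀ (i j : ℤ) (l m : ℂ),
      (act m (Gen.L j)).comp (X + C l) * act l (Gen.Y i)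
        - (act l (Gen.Y i)).comp (X + C m) * act m (Gen.L j)
        = C (l - m/2) * act (l+m) (Gen.Y (i+j)) := by
    intro i j l m
    have H := hcomp (Gen.Y i) (Gen.L j) l m
    rw [show br l (Gen.Y i) (Gen.L j)
          = Finsupp.single (Gen.Y (i+j)) (C (1/2) * X + C ((3/2)*l)) from rfl,
        Finsupp.sum_single_index (by simp)] at H
    rwa [show ((C (1/2) * X + C ((3/2)*l) : ℂ[X])).eval (-(l+m)) = l - m/2 from by
      simp only [eval_add, eval_mul, eval_X, eval_C]; ring] at H
  have YY : ∀ (i j : ℤ) (l m : ℂ),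
      (act m (Gen.Y j)).comp (X + C l) * act l (Gen.Y i)
        - (act l (Gen.Y i)).comp (X + C m) * act m (Gen.Y j)
        = C (l - m) * act (l+m) (Gen.M (i+j)) := by
    intro i j l m
    have H := hcomp (Gen.Y i) (Gen.Y j) l m
    rw [show br l (Gen.Y i) (Gen.Y j) = Finsupp.single (Gen.M (i+j)) (X + C (2*l)) from rfl,
        Finsupp.sum_single_index (by simp)] at H
    rwa [show ((X + C (2*l) : ℂ[X])).eval (-(l+m)) = l - m from by
      simp only [eval_add, eval_X, eval_C]; ring] at H
  have ML : ∀ (i j : ℤ) (l m : ℂ),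
      (act m (Gen.L j)).comp (X + C l) * act l (Gen.M i)
        - (act l (Gen.M i)).comp (X + C m) * act m (Gen.L j)
        = C l * act (l+m) (Gen.M (i+j)) := by
    intro i j l m
    have H := hcomp (Gen.M i) (Gen.L j) l m
    rw [show br l (Gen.M i) (Gen.L j) = Finsupp.single (Gen.M (i+j)) (C l) from rfl,
        Finsupp.sum_single_index (by simp)] at H
    rwa [eval_C] at H
  have MM : ∀ (i j : ℤ) (l m : ℂ),
      (act m (Gen.M j)).comp (X + C l) * act l (Gen.M i)
        - (act l (Gen.M i)).comp (X + C m) * act m (Gen.M j) = 0 := by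
    intro i j l m
    have H := hcomp (Gen.M i) (Gen.M j) l m
    rw [show br l (Gen.M i) (Gen.M j) = 0 from rfl, Finsupp.sum_zero_index] at H
    exact H
  -- S1: some L acts nontrivially
  have hLnontriv : ∃ (i : ℤ) (l : ℂ), act l (Gen.L i) ≠ 0 := by
    by_contra hc
    push_neg at hc
    have hMz : ∀ (i : ℤ) (s : ℂ), act s (Gen.M i) = 0 := by
      intro i s
      have H := ML i 0 1 (s - 1)
      rw [hc 0 (s-1)] at H
      simp only [zero_comp, zero_mul, mul_zero, sub_zero] at H
      rw [show (1 : ℂ) + (s - 1) = s from by ring, show i + 0 = i from by ring] at H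
      have := H.symm
      rcases mul_eq_zero.mp this with h | h
      · exact absurd h (by simpa using one_ne_zero)
      · exact h
    have hYz : ∀ (i : ℤ) (s : ℂ), act s (Gen.Y i) = 0 := by
      intro i s
      by_cases hs : s = 3
      · have H := YL i 0 2 1
        rw [hc 0 1] at H
        simp only [zero_comp, zero_mul, mul_zero, sub_zero] at H
        rw [show (2 : ℂ) + 1 = 3 from by norm_num, show i + 0 = i from by ring] at H
        subst hs
        rcases mul_eq_zero.mp H.symm with h | h
        · exfalso
          rw [show (C : ℂ →+* ℂ[X]) _ = 0 ↔ _ from map_eq_zero C] at h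
          norm_num at h
        · exact h
      · have H := YL i 0 1 (s - 1)
        rw [hc 0 (s-1)] at H
        simp only [zero_comp, zero_mul, mul_zero, sub_zero] at H
        rw [show (1 : ℂ) + (s - 1) = s from by ring, show i + 0 = i from by ring] at H
        rcases mul_eq_zero.mp H.symm with h | h
        · exfalso
          rw [show (C : ℂ →+* ℂ[X]) _ = 0 ↔ _ from map_eq_zero C] at h
          apply hs
          linear_combination -2*h
        · exact h
    obtain ⟨g0, l0, hg⟩ := hnontriv
    cases g0 with
    | L i => exact hg (hc i l0)
    | M i => exact hg (hMz i l0)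
    | Y i => exact hg (hYz i l0)
  obtain ⟨i₀, l₀, hL0⟩ := hLnontriv
  -- S2: no L is identically zero
  have hLne : ∀ k : ℤ, ∃ l, act l (Gen.L k) ≠ 0 := by
    intro k
    by_contra hcc
    push_neg at hcc
    apply hL0
    have hall : ∀ s : ℂ, act s (Gen.L i₀) = 0 := by
      intro s
      have H := LL k (i₀ - k) (s/2 + 1) (s/2 - 1)
      rw [hcc] at H
      simp only [zero_comp, zero_mul, mul_zero, sub_zero, zero_sub] at H
      rw [show (s/2 + 1) - (s/2 - 1) = (2:ℂ) from by ring,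
          show (s/2 + 1) + (s/2 - 1) = s from by ring,
          show k + (i₀ - k) = i₀ from by ring] at H
      rcases mul_eq_zero.mp H.symm with h | h
      · exfalso; rw [show (C : ℂ →+* ℂ[X]) _ = 0 ↔ _ from map_eq_zero C] at h; norm_num at h
      · exact h
    exact hall l₀
  have hLcofin : ∀ k : ℤ, {l : ℂ | act l (Gen.L k) = 0}.Finite := by
    intro k
    obtain ⟨l, hl⟩ := hLne k
    exact CSV.fam_zero_finite (famL k) hl
  -- S3 : relation (A i j l)
  have A : ∀ (i j : ℤ) (l : ℂ),
      ((act 0 (Gen.L j)).comp (X + C l) - act 0 (Gen.L j)) * act l (Gen.L i)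
        = C l * act l (Gen.L (i+j)) := by
    intro i j l
    have H := LL i j l 0
    rw [C_0, add_zero, comp_X, sub_zero, add_zero] at H
    linear_combination H
  -- S4 : relation (E i j l)
  have E : ∀ (i j : ℤ) (l : ℂ),
      ((act 0 (Gen.L i)).comp (X + C l) - act 0 (Gen.L i))
        * ((act 0 (Gen.L j)).comp (X + C l) - act 0 (Gen.L j))
        = C l * ((act 0 (Gen.L (i+j))).comp (X + C l) - act 0 (Gen.L (i+j))) := by
    intro i j
    have famD : ∀ n : ℤ, CSV.Fam (fun l => (act 0 (Gen.L n)).comp (X + C l) - act 0 (Gen.L n)) :=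
      fun n => (CSV.Fam.compShift _).sub (CSV.Fam.const _)
    apply CSV.fam_eq_off_finite ((famD i).mul (famD j)) (CSV.Fam.CId.mul (famD (i+j)))
      (hLcofin 0)
    intro l hl
    simp only [Set.mem_setOf_eq] at hl
    have h1 := A 0 i l
    have h2 := A i j l
    have h3 := A 0 (i+j) l
    rw [zero_add] at h1 h3
    have key : (((act 0 (Gen.L i)).comp (X + C l) - act 0 (Gen.L i))
        * ((act 0 (Gen.L j)).comp (X + C l) - act 0 (Gen.L j))
        - C l * ((act 0 (Gen.L (i+j))).comp (X + C l) - act 0 (Gen.L (i+j))))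
        * act l (Gen.L 0) = 0 := by
      have e1 := congrArg (fun p => ((act 0 (Gen.L j)).comp (X + C l) - act 0 (Gen.L j)) * p) h1
      -- e1 : Δj * (Δi * F l) = Δj * (C l * act l (L i))
      calc (((act 0 (Gen.L i)).comp (X + C l) - act 0 (Gen.L i))
            * ((act 0 (Gen.L j)).comp (X + C l) - act 0 (Gen.L j))
            - C l * ((act 0 (Gen.L (i+j))).comp (X + C l) - act 0 (Gen.L (i+j))))
            * act l (Gen.L 0)
          = ((act 0 (Gen.L j)).comp (X + C l) - act 0 (Gen.L j))
              * (((act 0 (Gen.L i)).comp (X + C l) - act 0 (Gen.L i)) * act l (Gen.L 0))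
            - C l * (((act 0 (Gen.L (i+j))).comp (X + C l) - act 0 (Gen.L (i+j)))
              * act l (Gen.L 0)) := by ring
        _ = ((act 0 (Gen.L j)).comp (X + C l) - act 0 (Gen.L j)) * (C l * act l (Gen.L i))
            - C l * (C l * act l (Gen.L (i+j))) := by rw [h1, h3]
        _ = C l * (((act 0 (Gen.L j)).comp (X + C l) - act 0 (Gen.L j)) * act l (Gen.L i))
            - C l * (C l * act l (Gen.L (i+j))) := by ring
        _ = 0 := by rw [h2]; ring
    rcases mul_eq_zero.mp key with h | h
    · linear_combination h
    · exact absurd h hl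
  have famD : ∀ n : ℤ, CSV.Fam (fun l => (act 0 (Gen.L n)).comp (X + C l) - act 0 (Gen.L n)) :=
    fun n => (CSV.Fam.compShift _).sub (CSV.Fam.const _)
  -- S5 : the 0-th shift difference is C l
  have hU0 : ∀ l : ℂ, (act 0 (Gen.L 0)).comp (X + C l) - act 0 (Gen.L 0) = C l := by
    by_cases hS : {l : ℂ | (act 0 (Gen.L 0)).comp (X + C l) - act 0 (Gen.L 0) = 0}.Infinite
    · exfalso
      have hzero : ∀ l : ℂ, (act 0 (Gen.L 0)).comp (X + C l) - act 0 (Gen.L 0) = 0 :=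
        CSV.fam_eq_of_infinite (famD 0) (CSV.Fam.const 0) hS (fun l hl => hl)
      have hF0 : ∀ l : ℂ, l ≠ 0 → act l (Gen.L 0) = 0 := by
        intro l hl
        have hA := A 0 0 l
        rw [zero_add, hzero l, zero_mul] at hA
        rcases mul_eq_zero.mp hA.symm with h | h
        · exact absurd (by rwa [show (C : ℂ →+* ℂ[X]) _ = 0 ↔ _ from map_eq_zero C] at h) hl
        · exact h
      have := CSV.fam_eq_of_ne_zero (famL 0) (CSV.Fam.const 0) hF0
      obtain ⟨l, hl⟩ := hLne 0
      exact hl (this l)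
    · have hfin := Set.not_infinite.mp hS
      apply CSV.fam_eq_off_finite (famD 0) CSV.Fam.CId hfin
      intro l hl
      simp only [Set.mem_setOf_eq] at hl
      have hE := E 0 0 l
      rw [show (0:ℤ) + 0 = 0 from rfl] at hE
      have key : ((act 0 (Gen.L 0)).comp (X + C l) - act 0 (Gen.L 0))
          * (((act 0 (Gen.L 0)).comp (X + C l) - act 0 (Gen.L 0)) - C l) = 0 := by
        linear_combination hE
      rcases mul_eq_zero.mp key with h | h
      · exact absurd h hl
      · exact sub_eq_zero.mp h
  -- S6 : each u i has degree ≤ 1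
  have hUdeg : ∀ i : ℤ, (act 0 (Gen.L i)).natDegree ≤ 1 := by
    intro i
    apply CSV.shift_diff_const
    intro l
    by_cases hl : l = 0
    · exact ⟨0, by subst hl; simp⟩
    · have hE := E i (-i) l
      rw [add_neg_cancel, hU0 l] at hE
      have hCl : (C l * C l : ℂ[X]) ≠ 0 := by
        apply mul_ne_zero <;>
          exact fun h => hl (by rwa [show (C : ℂ →+* ℂ[X]) _ = 0 ↔ _ from map_eq_zero C] at h)
      rw [← hE] at hCl
      have h1 := left_ne_zero_of_mul hCl
      have h2 := right_ne_zero_of_mul hCl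
      have hdeg : ((act 0 (Gen.L i)).comp (X + C l) - act 0 (Gen.L i)).natDegree
          + ((act 0 (Gen.L (-i))).comp (X + C l) - act 0 (Gen.L (-i))).natDegree = 0 := by
        rw [← natDegree_mul h1 h2, hE, ← C_mul, natDegree_C]
      exact ⟨_, eq_C_of_natDegree_eq_zero (by omega)⟩
  -- S7 : linear form of u i
  have hUform : ∀ i : ℤ, act 0 (Gen.L i)
      = C ((act 0 (Gen.L i)).coeff 1) * X + C ((act 0 (Gen.L i)).coeff 0) :=
    fun i => eq_X_add_C_of_natDegree_le_one (hUdeg i)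
  have hΔ : ∀ (i : ℤ) (l : ℂ), (act 0 (Gen.L i)).comp (X + C l) - act 0 (Gen.L i)
      = C ((act 0 (Gen.L i)).coeff 1 * l) := by
    intro i l
    conv_lhs => rw [hUform i]
    simp only [add_comp, mul_comp, C_comp, X_comp]
    rw [C_mul]
    ring
  have hγ0 : (act 0 (Gen.L 0)).coeff 1 = 1 := by
    have h := (hΔ 0 1).symm.trans (hU0 1)
    have := C_injective h
    rwa [mul_one] at this
  have hγadd : ∀ i j : ℤ, (act 0 (Gen.L (i+j))).coeff 1
      = (act 0 (Gen.L i)).coeff 1 * (act 0 (Gen.L j)).coeff 1 := by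
    intro i j
    have hE := E i j 1
    rw [hΔ, hΔ, hΔ, ← C_mul, ← C_mul] at hE
    have := C_injective hE
    linear_combination -this
  have hγne : ∀ i : ℤ, (act 0 (Gen.L i)).coeff 1 ≠ 0 := by
    intro i hzz
    have h := hγadd i (-i)
    rw [add_neg_cancel, hγ0, hzz, zero_mul] at h
    exact one_ne_zero h
  -- S9 : every L i is proportional to L 0
  have hLform : ∀ (i : ℤ) (l : ℂ),
      act l (Gen.L i) = C ((act 0 (Gen.L i)).coeff 1) * act l (Gen.L 0) := by
    intro i
    apply CSV.fam_eq_of_ne_zero (famL i) ((CSV.Fam.const _).mul (famL 0))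
    intro l hl
    have hA := A 0 i l
    rw [zero_add, hΔ, C_mul] at hA
    have key : C l * (act l (Gen.L i) - C ((act 0 (Gen.L i)).coeff 1) * act l (Gen.L 0)) = 0 := by
      linear_combination -hA
    rcases mul_eq_zero.mp key with h | h
    · exact absurd (by rwa [show (C : ℂ →+* ℂ[X]) _ = 0 ↔ _ from map_eq_zero C] at h) hl
    · exact sub_eq_zero.mp h
  -- S10 : F l := act l (L 0) never vanishes
  have hF00 : act 0 (Gen.L 0) = X + C ((act 0 (Gen.L 0)).coeff 0) := by
    conv_lhs => rw [hUform 0]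
    rw [hγ0, C_1, one_mul]
  have hFne : ∀ l : ℂ, act l (Gen.L 0) ≠ 0 := by
    intro l
    by_cases hl : l = 0
    · subst hl; rw [hF00]; exact X_add_C_ne_zero _
    · intro h0
      have H := LL 0 0 l (-l)
      rw [h0, zero_comp, zero_mul, mul_zero, sub_zero] at H
      rw [add_neg_cancel, show (0:ℤ)+0 = 0 from rfl, show l - -l = 2*l from by ring] at H
      rw [hF00] at H
      have : (C (2*l) * (X + C ((act 0 (Gen.L 0)).coeff 0)) : ℂ[X]) ≠ 0 :=
        mul_ne_zero (fun h => by
          rw [show (C : ℂ →+* ℂ[X]) _ = 0 ↔ _ from map_eq_zero C] at h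
          exact hl (by linear_combination h/2)) (X_add_C_ne_zero _)
      exact this H.symm
  -- S11 : degree sum relation
  have hdsum : ∀ l : ℂ, l ≠ 0 →
      (act l (Gen.L 0)).natDegree + (act (-l) (Gen.L 0)).natDegree = 2 := by
    intro l hl
    have H := LL 0 0 l (-l)
    rw [add_neg_cancel, show (0:ℤ)+0 = 0 from rfl, show l - -l = 2*l from by ring, hF00] at H
    have h2l : (2*l : ℂ) ≠ 0 := by
      intro h; exact hl (by linear_combination h/2)
    -- lower bound
    have hup := CSV.comm_degree (act (-l) (Gen.L 0)) (act l (Gen.L 0)) l (-l)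
      (hFne (-l)) (hFne l)
    rw [H] at hup
    rw [degree_C_mul h2l, degree_X_add_C] at hup
    have hlow : 1 < (act (-l) (Gen.L 0)).natDegree + (act l (Gen.L 0)).natDegree := by
      exact_mod_cast hup
    -- upper bound
    by_contra hne
    have h3 : 3 ≤ (act (-l) (Gen.L 0)).natDegree + (act l (Gen.L 0)).natDegree := by omega
    have hcc := CSV.comm_coeff (act (-l) (Gen.L 0)) (act l (Gen.L 0)) l (-l) (by omega)
    rw [H] at hcc
    have hz : (C (2*l) * (X + C ((act 0 (Gen.L 0)).coeff 0)) : ℂ[X]).coeff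
        ((act (-l) (Gen.L 0)).natDegree + (act l (Gen.L 0)).natDegree - 1) = 0 := by
      apply coeff_eq_zero_of_natDegree_lt
      calc (C (2*l) * (X + C ((act 0 (Gen.L 0)).coeff 0)) : ℂ[X]).natDegree
          ≤ (X + C ((act 0 (Gen.L 0)).coeff 0) : ℂ[X]).natDegree := natDegree_C_mul_le _ _
        _ = 1 := natDegree_X_add_C _
        _ < _ := by omega
    rw [hz] at hcc
    have hprod : ((act (-l) (Gen.L 0)).natDegree : ℂ) * l
        - ((act l (Gen.L 0)).natDegree : ℂ) * (-l)
        = l * (((act (-l) (Gen.L 0)).natDegree + (act l (Gen.L 0)).natDegree : ℕ) : ℂ) := by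
      push_cast; ring
    rw [hprod] at hcc
    have := mul_ne_zero (mul_ne_zero
        (leadingCoeff_ne_zero.mpr (hFne (-l))) (leadingCoeff_ne_zero.mpr (hFne l)))
      (mul_ne_zero hl (Nat.cast_ne_zero.mpr (by omega :
        (act (-l) (Gen.L 0)).natDegree + (act l (Gen.L 0)).natDegree ≠ 0)))
    exact this hcc.symm
  -- S12 : every F l has degree exactly 1
  have hdne : ∀ l : ℂ, l ≠ 0 → (act l (Gen.L 0)).natDegree ≠ 0 := by
    intro l hl h0
    have hd2 : (act (-l) (Gen.L 0)).natDegree = 2 := by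
      have := hdsum l hl; omega
    have hc0 : act l (Gen.L 0) = C ((act l (Gen.L 0)).coeff 0) := eq_C_of_natDegree_eq_zero h0
    have H := LL 0 0 (-2*l) l
    rw [show (0:ℤ)+0 = 0 from rfl, show (-2*l : ℂ) + l = -l from by ring] at H
    rw [hc0, C_comp] at H
    have hdm2l : (act (-2*l) (Gen.L 0)).natDegree ≤ 2 := by
      have := hdsum (-2*l) (by intro h; exact hl (by linear_combination -h/2))
      omega
    have hcomp2 : ((act (-2*l) (Gen.L 0)).comp (X + C l)).coeff 2
        = (act (-2*l) (Gen.L 0)).coeff 2 := CSV.taylor_coeff_top _ l 2 hdm2l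
    have hco := congrArg (fun p : ℂ[X] => p.coeff 2) H
    simp only [coeff_sub, coeff_C_mul, coeff_mul_C] at hco
    rw [hcomp2] at hco
    have hkey : (0:ℂ) = (-2*l - l) * (act (-l) (Gen.L 0)).coeff 2 := by
      linear_combination hco
    have hlead : (act (-l) (Gen.L 0)).coeff 2 ≠ 0 := by
      rw [← hd2, coeff_natDegree]
      exact leadingCoeff_ne_zero.mpr (hFne (-l))
    rcases mul_eq_zero.mp hkey.symm with h | h
    · exact hl (by linear_combination -h/3)
    · exact hlead h
  have hd1 : ∀ l : ℂ, (act l (Gen.L 0)).natDegree = 1 := by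
    intro l
    by_cases hl : l = 0
    · subst hl; rw [hF00]; exact natDegree_X_add_C _
    · have hs := hdsum l hl
      have h1 := hdne l hl
      have h2 := hdne (-l) (neg_ne_zero.mpr hl)
      omega
  -- S13 : linear form of every F l
  have hFform : ∀ l : ℂ, act l (Gen.L 0)
      = C ((act l (Gen.L 0)).coeff 1) * X + C ((act l (Gen.L 0)).coeff 0) :=
    fun l => eq_X_add_C_of_natDegree_le_one (le_of_eq (hd1 l))
  have hAne : ∀ l : ℂ, (act l (Gen.L 0)).coeff 1 ≠ 0 := by
    intro l
    have h := leadingCoeff_ne_zero.mpr (hFne l)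
    rwa [leadingCoeff, hd1 l] at h
  -- S14 : scalar functional equations
  have hEval : ∀ l m x : ℂ,
      ((act m (Gen.L 0)).coeff 1 * (x + l) + (act m (Gen.L 0)).coeff 0)
        * ((act l (Gen.L 0)).coeff 1 * x + (act l (Gen.L 0)).coeff 0)
      - ((act l (Gen.L 0)).coeff 1 * (x + m) + (act l (Gen.L 0)).coeff 0)
        * ((act m (Gen.L 0)).coeff 1 * x + (act m (Gen.L 0)).coeff 0)
      = (l - m) * ((act (l+m) (Gen.L 0)).coeff 1 * x + (act (l+m) (Gen.L 0)).coeff 0) := by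
    intro l m x
    have H := LL 0 0 l m
    rw [show (0:ℤ)+0 = 0 from rfl] at H
    rw [hFform l, hFform m, hFform (l+m)] at H
    have H2 := congrArg (fun p : ℂ[X] => p.eval x) H
    simp only [eval_sub, eval_mul, eval_comp, eval_add, eval_X, eval_C] at H2
    linear_combination H2
  have hE1 : ∀ l m : ℂ, l ≠ m →
      (act l (Gen.L 0)).coeff 1 * (act m (Gen.L 0)).coeff 1 = (act (l+m) (Gen.L 0)).coeff 1 := by
    intro l m hne
    have h1 := hEval l m 1
    have hm1 := hEval l m (-1)
    have hmid : ((act l (Gen.L 0)).coeff 1 * (act m (Gen.L 0)).coeff 1) * (l - m)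
        = (act (l+m) (Gen.L 0)).coeff 1 * (l - m) := by
      linear_combination (h1 - hm1)/2
    exact mul_right_cancel₀ (sub_ne_zero.mpr hne) hmid
  have hE2 : ∀ l m : ℂ,
      (act m (Gen.L 0)).coeff 1 * l * (act l (Gen.L 0)).coeff 0
        - (act l (Gen.L 0)).coeff 1 * m * (act m (Gen.L 0)).coeff 0
      = (l - m) * (act (l+m) (Gen.L 0)).coeff 0 := by
    intro l m
    linear_combination hEval l m 0
  -- S15 : the leading scalar is ≡ 1
  obtain ⟨PL, hPL⟩ := hpoly (Gen.L 0)
  obtain ⟨QA, hQA⟩ := CSV.coeff_eval_C PL 1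
  have hArep : ∀ l : ℂ, (act l (Gen.L 0)).coeff 1 = QA.eval l := by
    intro l; rw [hPL l, hQA l]
  have hA1 : ∀ l : ℂ, (act l (Gen.L 0)).coeff 1 = 1 :=
    CSV.cauchy_mul QA hArep hE1 hAne
  -- S16 : the constant scalar is affine
  obtain ⟨QB, hQB⟩ := CSV.coeff_eval_C PL 0
  have hBrep : ∀ l : ℂ, (act l (Gen.L 0)).coeff 0 = QB.eval l := by
    intro l; rw [hPL l, hQB l]
  have hBrel : ∀ l m : ℂ, l ≠ m →
      l * (act l (Gen.L 0)).coeff 0 - m * (act m (Gen.L 0)).coeff 0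
        = (l - m) * (act (l+m) (Gen.L 0)).coeff 0 := by
    intro l m hne
    have h := hE2 l m
    rw [hA1 l, hA1 m] at h
    linear_combination h
  have hBaff := CSV.affine_sol QB hBrep hBrel
  have hFfinal : ∀ l : ℂ, act l (Gen.L 0)
      = X + C (((act 1 (Gen.L 0)).coeff 0 - (act 0 (Gen.L 0)).coeff 0) * l
          + (act 0 (Gen.L 0)).coeff 0) := by
    intro l
    rw [hFform l, hA1 l, hBaff l, C_1, one_mul]
  -- S17 : powers
  have hcne : (act 0 (Gen.L 1)).coeff 1 ≠ 0 := hγne 1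
  have hγinv : (act 0 (Gen.L (-1))).coeff 1 = ((act 0 (Gen.L 1)).coeff 1)⁻¹ := by
    have h := hγadd 1 (-1)
    rw [add_neg_cancel, hγ0] at h
    exact (inv_eq_of_mul_eq_one_right h.symm).symm
  have hγpow : ∀ i : ℤ, (act 0 (Gen.L i)).coeff 1 = ((act 0 (Gen.L 1)).coeff 1) ^ i := by
    intro i
    induction i using Int.induction_on with
    | zero => rw [hγ0, zpow_zero]
    | succ n ih => rw [hγadd n 1, ih, zpow_add_one₀ hcne]
    | pred n ih =>
      rw [show (-(n:ℤ) - 1) = -(n:ℤ) + -1 from by ring, hγadd (-(n:ℤ)) (-1), ih, hγinv,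
        show -(n:ℤ) + -1 = -(n:ℤ) - 1 from by ring, zpow_sub_one₀ hcne]
  -- transports for M and Y
  have hMtrans : ∀ (j : ℤ) (l : ℂ),
      act l (Gen.M j) = C ((act 0 (Gen.L j)).coeff 1) * act l (Gen.M 0) := by
    intro j
    apply CSV.fam_eq_of_ne_zero (famM j) ((CSV.Fam.const _).mul (famM 0))
    intro l hl
    have H := ML 0 j l 0
    rw [C_0, add_zero, comp_X, add_zero, zero_add] at H
    have hh := hΔ j l
    rw [C_mul] at hh
    have key : C l * (act l (Gen.M j) - C ((act 0 (Gen.L j)).coeff 1) * act l (Gen.M 0)) = 0 := by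
      linear_combination (act l (Gen.M 0)) * hh - H
    rcases mul_eq_zero.mp key with h | h
    · exact absurd (by rwa [show (C : ℂ →+* ℂ[X]) _ = 0 ↔ _ from map_eq_zero C] at h) hl
    · exact sub_eq_zero.mp h
  have hYtrans : ∀ (j : ℤ) (l : ℂ),
      act l (Gen.Y j) = C ((act 0 (Gen.L j)).coeff 1) * act l (Gen.Y 0) := by
    intro j
    apply CSV.fam_eq_of_ne_zero (famY j) ((CSV.Fam.const _).mul (famY 0))
    intro l hl
    have H := YL 0 j l 0
    rw [C_0, add_zero, comp_X, add_zero, zero_add, zero_div, sub_zero] at H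
    have hh := hΔ j l
    rw [C_mul] at hh
    have key : C l * (act l (Gen.Y j) - C ((act 0 (Gen.L j)).coeff 1) * act l (Gen.Y 0)) = 0 := by
      linear_combination (act l (Gen.Y 0)) * hh - H
    rcases mul_eq_zero.mp key with h | h
    · exact absurd (by rwa [show (C : ℂ →+* ℂ[X]) _ = 0 ↔ _ from map_eq_zero C] at h) hl
    · exact sub_eq_zero.mp h
  -- the (L 0, Y 0) relation
  have Hl : ∀ l : ℂ,
      (X + C (((act 1 (Gen.L 0)).coeff 0 - (act 0 (Gen.L 0)).coeff 0) * l
          + (act 0 (Gen.L 0)).coeff 0))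
        * ((act 0 (Gen.Y 0)).comp (X + C l) - act 0 (Gen.Y 0))
      = C (l/2) * act l (Gen.Y 0) := by
    intro l
    have H := LY 0 0 l 0
    simp only [C_0, add_zero, comp_X, sub_zero, zero_add] at H
    rw [hFfinal l] at H
    linear_combination H
  -- Y 0 acts trivially
  have hY00 : ∀ l : ℂ, act l (Gen.Y 0) = 0 := by
    rcases Nat.eq_zero_or_pos (act 0 (Gen.Y 0)).natDegree with hk0 | hkpos
    · -- constant case
      have hzero : ∀ l : ℂ, l ≠ 0 → act l (Gen.Y 0) = 0 := by
        intro l hl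
        have H := Hl l
        have hd : (act 0 (Gen.Y 0)).comp (X + C l) - act 0 (Gen.Y 0) = 0 := by
          conv_lhs => rw [eq_C_of_natDegree_eq_zero hk0]
          rw [C_comp, sub_self]
        rw [hd, mul_zero] at H
        rcases mul_eq_zero.mp H.symm with h | h
        · exact absurd (by
            rw [show (C : ℂ →+* ℂ[X]) _ = 0 ↔ _ from map_eq_zero C] at h
            exact (by linear_combination 2*h : l = 0)) hl
        · exact h
      exact CSV.fam_eq_of_ne_zero (famY 0) (CSV.Fam.const 0) hzero
    · exfalso
      have hnd : (act 0 (Gen.Y 0)).natDegree = (act 0 (Gen.Y 0)).natDegree := rfl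
      set k := (act 0 (Gen.Y 0)).natDegree with hk
      have hY0ne : act 0 (Gen.Y 0) ≠ 0 := by
        intro h
        rw [h, natDegree_zero] at hk
        omega
      set w := (act 0 (Gen.Y 0)).leadingCoeff with hw
      have hwne : w ≠ 0 := leadingCoeff_ne_zero.mpr hY0ne
      have hkc : (k:ℂ) ≠ 0 := Nat.cast_ne_zero.mpr (by omega)
      have hck : (act 0 (Gen.Y 0)).coeff k = w := coeff_natDegree
      have hYdeg : ∀ l : ℂ, l ≠ 0 → (act l (Gen.Y 0)).natDegree = k
          ∧ (act l (Gen.Y 0)).leadingCoeff = 2*(k:ℂ)*w ∧ act l (Gen.Y 0) ≠ 0 := by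
        intro l hl
        have hΔco : ((act 0 (Gen.Y 0)).comp (X + C l) - act 0 (Gen.Y 0)).coeff (k-1)
            = (k:ℂ)*l*w := by
          rw [coeff_sub, CSV.taylor_coeff_near _ l (k-1) (by rw [← hk]; omega)]
          rw [show k - 1 + 1 = k from by omega, CSV.cast_pred_add_one hkpos, hck]
          ring
        have hΔne : (act 0 (Gen.Y 0)).comp (X + C l) - act 0 (Gen.Y 0) ≠ 0 := by
          intro h
          rw [h, coeff_zero] at hΔco
          exact (mul_ne_zero (mul_ne_zero hkc hl) hwne) hΔco.symm
        have hdeq : ((act 0 (Gen.Y 0)).comp (X + C l)).degree = (act 0 (Gen.Y 0)).degree := by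
          rw [degree_eq_natDegree (CSV.comp_shift_ne_zero hY0ne l), degree_eq_natDegree hY0ne,
            CSV.natDegree_comp_shift]
        have hdlt := degree_sub_lt hdeq (CSV.comp_shift_ne_zero hY0ne l)
          (CSV.leadingCoeff_comp_shift _ _)
        rw [hdeq, degree_eq_natDegree hY0ne, ← hk] at hdlt
        have hΔlt : ((act 0 (Gen.Y 0)).comp (X + C l) - act 0 (Gen.Y 0)).natDegree < k :=
          (natDegree_lt_iff_degree_lt hΔne).mpr hdlt
        have hΔge : k - 1 ≤ ((act 0 (Gen.Y 0)).comp (X + C l) - act 0 (Gen.Y 0)).natDegree :=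
          le_natDegree_of_ne_zero (by
            rw [hΔco]; exact mul_ne_zero (mul_ne_zero hkc hl) hwne)
        have hΔdeg : ((act 0 (Gen.Y 0)).comp (X + C l) - act 0 (Gen.Y 0)).natDegree = k - 1 := by
          omega
        have hΔlead : ((act 0 (Gen.Y 0)).comp (X + C l) - act 0 (Gen.Y 0)).leadingCoeff
            = (k:ℂ)*l*w := by
          rw [leadingCoeff, hΔdeg, hΔco]
        have H := Hl l
        have hl2 : (l/2 : ℂ) ≠ 0 := by
          intro h; exact hl (by linear_combination 2*h)
        have hYlne : act l (Gen.Y 0) ≠ 0 := by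
          intro h
          rw [h, mul_zero] at H
          exact (mul_ne_zero (X_add_C_ne_zero _) hΔne) H
        have hdegY : (act l (Gen.Y 0)).natDegree = k := by
          have hcd := congrArg natDegree H
          rw [natDegree_mul (X_add_C_ne_zero _) hΔne, natDegree_X_add_C, hΔdeg,
            natDegree_C_mul hl2] at hcd
          omega
        have hleadY : (act l (Gen.Y 0)).leadingCoeff = 2*(k:ℂ)*w := by
          have hcl := congrArg leadingCoeff H
          rw [leadingCoeff_mul, leadingCoeff_mul, leadingCoeff_X_add_C, leadingCoeff_C,
            hΔlead, one_mul] at hcl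
          have heq2 : l * (act l (Gen.Y 0)).leadingCoeff = l * (2*(k:ℂ)*w) := by
            linear_combination -2*hcl
          exact mul_left_cancel₀ hl heq2
        exact ⟨hdegY, hleadY, hYlne⟩
      have hg0coeff : ∀ s : ℂ, (act s (Gen.M 0)).coeff (2*k-1)
          = (2*(k:ℂ)*w)*(2*(k:ℂ)*w)*(k:ℂ) := by
        intro s
        obtain ⟨l, m, hl, hm, hlm, hsum⟩ : ∃ l m : ℂ, l ≠ 0 ∧ m ≠ 0 ∧ l ≠ m ∧ l + m = s := by
          by_cases h2 : s = 2
          · refine ⟨s/2+2, s/2-2, ?_, ?_, ?_, by ring⟩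
            · rw [h2]; norm_num
            · rw [h2]; norm_num
            · rw [h2]; norm_num
          · by_cases h2' : s = -2
            · refine ⟨s/2+2, s/2-2, ?_, ?_, ?_, by ring⟩
              · rw [h2']; norm_num
              · rw [h2']; norm_num
              · rw [h2']; norm_num
            · refine ⟨s/2+1, s/2-1, ?_, ?_, ?_, by ring⟩
              · intro h; exact h2' (by linear_combination 2*h)
              · intro h; exact h2 (by linear_combination 2*h)
              · intro h
                have : (1:ℂ) = -1 := by linear_combination h
                norm_num at this
        obtain ⟨hdl, hll, hnl⟩ := hYdeg l hl
        obtain ⟨hdm, hlm', hnm⟩ := hYdeg m hm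
        have hcc := CSV.comm_coeff (act m (Gen.Y 0)) (act l (Gen.Y 0)) l m
          (by rw [hdm, hdl]; omega)
        have H := YY 0 0 l m
        rw [show (0:ℤ)+0 = 0 from rfl, hsum] at H
        rw [H, hdm, hdl, hll, hlm', coeff_C_mul] at hcc
        rw [show k + k - 1 = 2*k-1 from by omega] at hcc
        have hfin : (l - m) * (act s (Gen.M 0)).coeff (2*k-1)
            = (l - m) * ((2*(k:ℂ)*w)*(2*(k:ℂ)*w)*(k:ℂ)) := by
          linear_combination hcc
        exact mul_left_cancel₀ (sub_ne_zero.mpr hlm) hfin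
      have hKne : (2*(k:ℂ)*w)*(2*(k:ℂ)*w)*(k:ℂ) ≠ 0 :=
        mul_ne_zero (mul_ne_zero (mul_ne_zero (mul_ne_zero two_ne_zero hkc) hwne)
          (mul_ne_zero (mul_ne_zero two_ne_zero hkc) hwne)) hkc
      have hMne : ∀ s : ℂ, act s (Gen.M 0) ≠ 0 := fun s h =>
        hKne (by rw [← hg0coeff s, h, coeff_zero])
      have hMdeg : ∀ s : ℂ, 1 ≤ (act s (Gen.M 0)).natDegree := by
        intro s
        have := le_natDegree_of_ne_zero
          (show (act s (Gen.M 0)).coeff (2*k-1) ≠ 0 from by rw [hg0coeff s]; exact hKne)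
        omega
      have hrel : ∀ l m : ℂ,
          ((act m (Gen.M 0)).natDegree : ℂ) * l = ((act l (Gen.M 0)).natDegree : ℂ) * m := by
        intro l m
        have hcc := CSV.comm_coeff (act m (Gen.M 0)) (act l (Gen.M 0)) l m
          (by have := hMdeg l; omega)
        rw [MM 0 0 l m, coeff_zero] at hcc
        have hld := mul_ne_zero (leadingCoeff_ne_zero.mpr (hMne m))
          (leadingCoeff_ne_zero.mpr (hMne l))
        rcases mul_eq_zero.mp hcc.symm with h | h
        · exact absurd h hld
        · linear_combination h
      have hn1pos := hMdeg 1
      have hn1c : (((act 1 (Gen.M 0)).natDegree : ℕ):ℂ) ≠ 0 :=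
        Nat.cast_ne_zero.mpr (by omega)
      have hval := hrel (1/(2*((act 1 (Gen.M 0)).natDegree:ℂ))) 1
      rw [mul_one] at hval
      have hhalf : ((act (1/(2*((act 1 (Gen.M 0)).natDegree:ℂ))) (Gen.M 0)).natDegree : ℂ)
          = 1/2 := by
        rw [← hval]
        field_simp
      have h2c : ((2 * (act (1/(2*((act 1 (Gen.M 0)).natDegree:ℂ))) (Gen.M 0)).natDegree : ℕ):ℂ)
          = ((1:ℕ):ℂ) := by
        push_cast
        linear_combination 2*hhalf
      have h2n := Nat.cast_injective h2c
      have := hMdeg (1/(2*((act 1 (Gen.M 0)).natDegree:ℂ)))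
      omega
  -- M 0 acts trivially
  have hM00 : ∀ s : ℂ, act s (Gen.M 0) = 0 := by
    intro s
    have H := YY 0 0 (s/2+1) (s/2-1)
    rw [hY00, hY00, zero_comp, zero_mul, mul_zero, sub_zero,
      show (s/2+1) + (s/2-1) = s from by ring,
      show (s/2+1) - (s/2-1) = (2:ℂ) from by ring,
      show (0:ℤ)+0 = 0 from rfl] at H
    rcases mul_eq_zero.mp H.symm with h | h
    · exfalso
      rw [show (C : ℂ →+* ℂ[X]) _ = 0 ↔ _ from map_eq_zero C] at h
      norm_num at h
    · exact h
  -- assemble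
  refine ⟨(act 1 (Gen.L 0)).coeff 0 - (act 0 (Gen.L 0)).coeff 0,
    (act 0 (Gen.L 0)).coeff 0, (act 0 (Gen.L 1)).coeff 1, hcne, ?_, ?_, ?_⟩
  · intro i l
    rw [hLform i l, hγpow i, hFfinal l]
  · intro i l
    rw [hMtrans i l, hM00 l, mul_zero]
  · intro i l
    rw [hYtrans i l, hY00 l, mul_zero]
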